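/- Let m > 1, A > 0, and φ(x) = (x^m − A^{m−1} x) 1_{(0,A)}(x). If b is a non-mass-transferring daughter distribution (b(z,x,y) = b̄(z,x,y)1_{(0,x)}(z) + b̄(z,y,x)1_{(0,y)}(z) with ∫_0^x z b̄(z,x,y) dz = x and b̄(z,x,y)=0 for z > x), then ζ_φ(x,y) := ∫_0^{x+y} φ(z) b(z,x,y) dz − φ(x) − φ(y) ≤ 0 for all x, y > 0. -/
import Mathlib

open MeasureTheory Real

private lemma phi_meas (m A : ℝ) :
    Measurable ((Set.Ioo (0:ℝ) A).indicator (fun z => z ^ m - A ^ (m - 1) * z)) := by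
  apply Measurable.indicator _ measurableSet_Ioo
  fun_prop

-- |F z| ≤ A^(m-1) * z for z > 0
private lemma phi_abs (m A : ℝ) (hm : 1 < m) (hA : 0 < A) {z : ℝ} (hz : 0 < z) :
    |(Set.Ioo (0:ℝ) A).indicator (fun z => z ^ m - A ^ (m - 1) * z) z| ≤ A ^ (m - 1) * z := by
  have hAp : 0 < A ^ (m - 1) := rpow_pos_of_pos hA _
  have hpow : ∀ w : ℝ, 0 < w → w ^ m = w ^ (m - 1) * w := by
    intro w hw
    have h := Real.rpow_add hw (m - 1) 1
    rw [sub_add_cancel, rpow_one] at h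
    exact h
  by_cases hzA : z < A
  · rw [Set.indicator_of_mem (Set.mem_Ioo.mpr ⟨hz, hzA⟩)]
    have h1 : 0 ≤ z ^ m := (rpow_pos_of_pos hz m).le
    have h2 : z ^ m ≤ A ^ (m - 1) * z := by
      rw [hpow z hz]
      have : z ^ (m - 1) ≤ A ^ (m - 1) := rpow_le_rpow hz.le hzA.le (by linarith)
      nlinarith
    rw [abs_le]
    constructor <;> nlinarith
  · rw [Set.indicator_of_notMem (fun h => hzA (Set.mem_Ioo.mp h).2)]
    simpa using (mul_pos hAp hz).le

-- pointwise: F z ≤ (F x / x) * z for z ∈ Ioo 0 x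
private lemma phi_key (m A : ℝ) (hm : 1 < m) (hA : 0 < A) {x z : ℝ} (hx : 0 < x)
    (hz : z ∈ Set.Ioo (0:ℝ) x) :
    (Set.Ioo (0:ℝ) A).indicator (fun z => z ^ m - A ^ (m - 1) * z) z ≤
      ((Set.Ioo (0:ℝ) A).indicator (fun z => z ^ m - A ^ (m - 1) * z) x / x) * z := by
  obtain ⟨hz0, hzx⟩ := hz
  have hpow : ∀ w : ℝ, 0 < w → w ^ m = w ^ (m - 1) * w := by
    intro w hw
    have h := Real.rpow_add hw (m - 1) 1
    rw [sub_add_cancel, rpow_one] at h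
    exact h
  by_cases hxA : x < A
  · rw [Set.indicator_of_mem (Set.mem_Ioo.mpr ⟨hx, hxA⟩),
      Set.indicator_of_mem (Set.mem_Ioo.mpr ⟨hz0, hzx.trans hxA⟩)]
    have hzm : z ^ m = z ^ (m - 1) * z := hpow z hz0
    have hxm : x ^ m = x ^ (m - 1) * x := hpow x hx
    have hle : z ^ (m - 1) ≤ x ^ (m - 1) := rpow_le_rpow hz0.le hzx.le (by linarith)
    rw [hzm, hxm, div_mul_eq_mul_div, le_div_iff₀ hx]
    nlinarith [mul_le_mul_of_nonneg_right hle (mul_pos hz0 hx).le]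
  · rw [Set.indicator_of_notMem (fun h => hxA (Set.mem_Ioo.mp h).2), zero_div, zero_mul]
    by_cases hzA : z < A
    · rw [Set.indicator_of_mem (Set.mem_Ioo.mpr ⟨hz0, hzA⟩)]
      have hzm : z ^ m = z ^ (m - 1) * z := hpow z hz0
      have hle : z ^ (m - 1) ≤ A ^ (m - 1) := rpow_le_rpow hz0.le hzA.le (by linarith)
      nlinarith
    · rw [Set.indicator_of_notMem (fun h => hzA (Set.mem_Ioo.mp h).2)]

private lemma aux_int (m A : ℝ) (hm : 1 < m) (hA : 0 < A) (g : ℝ → ℝ)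
    (hg : ∀ z, 0 ≤ g z) (hgm : Measurable g) (x c : ℝ) (hx : 0 < x) (hc : x ≤ c)
    (hmass : ∫ z in Set.Ioo (0:ℝ) x, z * g z = x) :
    Integrable ((Set.Ioo (0:ℝ) x).indicator (fun z => z * g z))
      ∧ IntegrableOn (fun z =>
        (Set.Ioo (0:ℝ) A).indicator (fun z => z ^ m - A ^ (m - 1) * z) z
          * (Set.Ioo (0:ℝ) x).indicator g z) (Set.Ioo (0:ℝ) c) := by
  have hint : IntegrableOn (fun z => z * g z) (Set.Ioo (0:ℝ) x) := by
    by_contra h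
    rw [integral_undef h] at hmass
    linarith
  have h_ind : Integrable ((Set.Ioo (0:ℝ) x).indicator (fun z => z * g z)) :=
    hint.integrable_indicator measurableSet_Ioo
  refine ⟨h_ind, ?_⟩
  have hbound : ∀ z, ‖(Set.Ioo (0:ℝ) A).indicator (fun z => z ^ m - A ^ (m - 1) * z) z
      * (Set.Ioo (0:ℝ) x).indicator g z‖
      ≤ A ^ (m - 1) * (Set.Ioo (0:ℝ) x).indicator (fun z => z * g z) z := by
    intro z
    by_cases hz : z ∈ Set.Ioo (0:ℝ) x
    · rw [Set.indicator_of_mem hz, Set.indicator_of_mem hz, norm_mul]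
      have := phi_abs m A hm hA hz.1
      have hgz := hg z
      calc ‖(Set.Ioo (0:ℝ) A).indicator (fun z => z ^ m - A ^ (m - 1) * z) z‖ * ‖g z‖
          ≤ (A ^ (m - 1) * z) * g z := by
            rw [Real.norm_eq_abs, Real.norm_eq_abs, abs_of_nonneg hgz]
            apply mul_le_mul_of_nonneg_right this hgz
        _ = A ^ (m - 1) * (z * g z) := by ring
    · rw [Set.indicator_of_notMem hz, Set.indicator_of_notMem hz, mul_zero, mul_zero,
        norm_zero]
  apply Integrable.mono' ((h_ind.const_mul (A ^ (m - 1))).integrableOn)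
  · exact ((phi_meas m A).mul ((hgm.indicator measurableSet_Ioo))).aestronglyMeasurable
  · exact Filter.Eventually.of_forall hbound

private lemma aux (m A : ℝ) (hm : 1 < m) (hA : 0 < A) (g : ℝ → ℝ)
    (hg : ∀ z, 0 ≤ g z) (hgm : Measurable g) (x c : ℝ) (hx : 0 < x) (hc : x ≤ c)
    (hmass : ∫ z in Set.Ioo (0:ℝ) x, z * g z = x) :
    ∫ z in Set.Ioo (0:ℝ) c,
      (Set.Ioo (0:ℝ) A).indicator (fun z => z ^ m - A ^ (m - 1) * z) z
        * (Set.Ioo (0:ℝ) x).indicator g z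
      ≤ (Set.Ioo (0:ℝ) A).indicator (fun z => z ^ m - A ^ (m - 1) * z) x := by
  obtain ⟨h_ind, h_lhs⟩ := aux_int m A hm hA g hg hgm x c hx hc hmass
  set F := (Set.Ioo (0:ℝ) A).indicator (fun z => z ^ m - A ^ (m - 1) * z) with hF
  have hpt : ∀ z, F z * (Set.Ioo (0:ℝ) x).indicator g z
      ≤ (F x / x) * (Set.Ioo (0:ℝ) x).indicator (fun z => z * g z) z := by
    intro z
    by_cases hz : z ∈ Set.Ioo (0:ℝ) x
    · rw [Set.indicator_of_mem hz, Set.indicator_of_mem hz]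
      have hkey := phi_key m A hm hA hx hz
      have hgz := hg z
      calc F z * g z ≤ ((F x / x) * z) * g z :=
            mul_le_mul_of_nonneg_right hkey hgz
        _ = (F x / x) * (z * g z) := by ring
    · rw [Set.indicator_of_notMem hz, Set.indicator_of_notMem hz, mul_zero, mul_zero]
  have hstep : ∫ z in Set.Ioo (0:ℝ) c, F z * (Set.Ioo (0:ℝ) x).indicator g z
      ≤ ∫ z in Set.Ioo (0:ℝ) c,
          (F x / x) * (Set.Ioo (0:ℝ) x).indicator (fun z => z * g z) z := by
    apply setIntegral_mono h_lhs ((h_ind.const_mul (F x / x)).integrableOn)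
    exact hpt
  have hval : ∫ z in Set.Ioo (0:ℝ) c,
      (F x / x) * (Set.Ioo (0:ℝ) x).indicator (fun z => z * g z) z = F x := by
    rw [integral_const_mul, setIntegral_indicator measurableSet_Ioo]
    have : Set.Ioo (0:ℝ) c ∩ Set.Ioo (0:ℝ) x = Set.Ioo (0:ℝ) x := by
      rw [Set.inter_eq_right]
      exact Set.Ioo_subset_Ioo le_rfl hc
    rw [this, hmass]
    field_simp
  linarith [hstep, hval.le]

theorem stmt_11 (m A : ℝ) (hm : 1 < m) (hA : 0 < A) (bbar : ℝ → ℝ → ℝ → ℝ)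
    (hnn : ∀ z x y, 0 ≤ bbar z x y)
    (hmeas : ∀ x y, Measurable (fun z => bbar z x y))
    (hvan : ∀ z x y, x < z → bbar z x y = 0)
    (hmass : ∀ x y : ℝ, 0 < x → 0 < y → ∫ z in Set.Ioo (0:ℝ) x, z * bbar z x y = x)
    (x y : ℝ) (hx : 0 < x) (hy : 0 < y) :
    (∫ z in Set.Ioo (0:ℝ) (x + y),
          (Set.Ioo (0:ℝ) A).indicator (fun z => z ^ m - A ^ (m - 1) * z) z
            * ((Set.Ioo (0:ℝ) x).indicator (fun z => bbar z x y) z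
              + (Set.Ioo (0:ℝ) y).indicator (fun z => bbar z y x) z))
        - (Set.Ioo (0:ℝ) A).indicator (fun z => z ^ m - A ^ (m - 1) * z) x
        - (Set.Ioo (0:ℝ) A).indicator (fun z => z ^ m - A ^ (m - 1) * z) y
      ≤ 0 := by
  set F := (Set.Ioo (0:ℝ) A).indicator (fun z => z ^ m - A ^ (m - 1) * z) with hF
  have h1 := aux m A hm hA (fun z => bbar z x y) (fun z => hnn z x y) (hmeas x y)
    x (x + y) hx (by linarith) (hmass x y hx hy)
  have h2 := aux m A hm hA (fun z => bbar z y x) (fun z => hnn z y x) (hmeas y x)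
    y (x + y) hy (by linarith) (hmass y x hy hx)
  have hi1 := (aux_int m A hm hA (fun z => bbar z x y) (fun z => hnn z x y) (hmeas x y)
    x (x + y) hx (by linarith) (hmass x y hx hy)).2
  have hi2 := (aux_int m A hm hA (fun z => bbar z y x) (fun z => hnn z y x) (hmeas y x)
    y (x + y) hy (by linarith) (hmass y x hy hx)).2
  have hsplit : (∫ z in Set.Ioo (0:ℝ) (x + y),
      F z * ((Set.Ioo (0:ℝ) x).indicator (fun z => bbar z x y) z
        + (Set.Ioo (0:ℝ) y).indicator (fun z => bbar z y x) z))
      = (∫ z in Set.Ioo (0:ℝ) (x + y),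
          F z * (Set.Ioo (0:ℝ) x).indicator (fun z => bbar z x y) z)
        + ∫ z in Set.Ioo (0:ℝ) (x + y),
          F z * (Set.Ioo (0:ℝ) y).indicator (fun z => bbar z y x) z := by
    rw [← integral_add hi1 hi2]
    congr 1
    ext z
    ring
  rw [hsplit]
  linarith
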